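/- Let a, b, c and a′, b′, c′ be integers with 0 ≤ a, 0 ≤ b, a ∣ b, b ∣ c and 0 ≤ a′, 0 ≤ b′, a′ ∣ b′, b′ ∣ c′. If there exists a ℤ-linear automorphism f of ℤ⁶ with determinant 1 such that the induced automorphism ⋀²f of ⋀²(ℤ⁶) sends a·(e₁∧e₂) + b·(e₃∧e₄) + c·(e₅∧e₆) to a′·(e₁∧e₂) + b′·(e₃∧e₄) + c′·(e₅∧e₆), then a = a′, b = b′ and c = c′. -/

import Mathlib

set_option maxRecDepth 4000
set_option maxHeartbeats 1000000

open ExteriorAlgebra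

/-- The image in the exterior algebra of the `i`-th standard basis vector of `ℤⁿ`. -/
noncomputable def e {n : ℕ} (i : Fin n) : ExteriorAlgebra ℤ (Fin n → ℤ) :=
  ι ℤ (Pi.single i 1)

namespace NFAux

abbrev V : Type := Fin 6 → ℤ

noncomputable def sb (i : Fin 6) : V := Pi.single i 1

/-! ### Anticommutation helpers -/

lemma swap (p q : V) : ι ℤ p * ι ℤ q = -(ι ℤ q * ι ℤ p) :=
  eq_neg_of_add_eq_zero_left (ι_add_mul_swap p q)

lemma c12 (p q r : V) : ι ℤ r * (ι ℤ p * ι ℤ q) = (ι ℤ p * ι ℤ q) * ι ℤ r := by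
  rw [← mul_assoc, swap r p, neg_mul, mul_assoc, swap r q, mul_neg, neg_neg, mul_assoc]

lemma c22 (p q r s : V) :
    (ι ℤ p * ι ℤ q) * (ι ℤ r * ι ℤ s) = (ι ℤ r * ι ℤ s) * (ι ℤ p * ι ℤ q) := by
  calc (ι ℤ p * ι ℤ q) * (ι ℤ r * ι ℤ s) = ((ι ℤ p * ι ℤ q) * ι ℤ r) * ι ℤ s :=
        (mul_assoc _ _ _).symm
    _ = (ι ℤ r * (ι ℤ p * ι ℤ q)) * ι ℤ s := by rw [c12]
    _ = ι ℤ r * ((ι ℤ p * ι ℤ q) * ι ℤ s) := mul_assoc _ _ _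
    _ = ι ℤ r * (ι ℤ s * (ι ℤ p * ι ℤ q)) := by rw [c12]
    _ = (ι ℤ r * ι ℤ s) * (ι ℤ p * ι ℤ q) := (mul_assoc _ _ _).symm

lemma sq22 (p q : V) : (ι ℤ p * ι ℤ q) * (ι ℤ p * ι ℤ q) = 0 := by
  have h : ι ℤ q * (ι ℤ p * ι ℤ q) = 0 := by
    rw [c12, mul_assoc, ι_sq_zero, mul_zero]
  rw [mul_assoc, h, mul_zero]

lemma tABA (p q r s : V) :
    ((ι ℤ p * ι ℤ q) * (ι ℤ r * ι ℤ s)) * (ι ℤ p * ι ℤ q) = 0 := by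
  rw [mul_assoc, c22 r s p q, ← mul_assoc, sq22, zero_mul]

lemma tABB (p q r s : V) :
    ((ι ℤ p * ι ℤ q) * (ι ℤ r * ι ℤ s)) * (ι ℤ r * ι ℤ s) = 0 := by
  rw [mul_assoc, sq22, mul_zero]

/-! ### Powers of the normal form -/

local notation "X" => e (0:Fin 6) * e 1
local notation "Y" => e (2:Fin 6) * e 3
local notation "Z" => e (4:Fin 6) * e 5

lemma hXX : X * X = 0 := sq22 _ _
lemma hYY : Y * Y = 0 := sq22 _ _
lemma hZZ : Z * Z = 0 := sq22 _ _
lemma hYX : Y * X = X * Y := c22 _ _ _ _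
lemma hZX : Z * X = X * Z := c22 _ _ _ _
lemma hZY : Z * Y = Y * Z := c22 _ _ _ _

lemma hXYX : (X * Y) * X = 0 := tABA _ _ _ _
lemma hXYY : (X * Y) * Y = 0 := tABB _ _ _ _
lemma hXZX : (X * Z) * X = 0 := tABA _ _ _ _
lemma hXZZ : (X * Z) * Z = 0 := tABB _ _ _ _
lemma hYZY : (Y * Z) * Y = 0 := tABA _ _ _ _
lemma hYZZ : (Y * Z) * Z = 0 := tABB _ _ _ _

lemma c22e (i j k l : Fin 6) : (e i * e j) * (e k * e l) = (e k * e l) * (e i * e j) :=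
  c22 _ _ _ _

lemma hXYZ : (X * Y) * Z = X * (Y * Z) := mul_assoc _ _ _
lemma hXZY : (X * Z) * Y = X * (Y * Z) := by rw [mul_assoc, c22e 4 5 2 3]
lemma hYZX : (Y * Z) * X = X * (Y * Z) := by
  rw [mul_assoc, c22e 4 5 0 1, ← mul_assoc, c22e 2 3 0 1, mul_assoc]

lemma omega_sq (a b c : ℤ) :
    (a • X + b • Y + c • Z) * (a • X + b • Y + c • Z)
      = (2*(a*b)) • (X * Y) + (2*(a*c)) • (X * Z) + (2*(b*c)) • (Y * Z) := by
  simp only [add_mul, mul_add, smul_mul_assoc, mul_smul_comm, hXX, hYY, hZZ, hYX, hZX, hZY,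
    smul_zero, add_zero, zero_add, smul_smul]
  module

lemma omega_cube (a b c : ℤ) :
    ((a • X + b • Y + c • Z) * (a • X + b • Y + c • Z)) * (a • X + b • Y + c • Z)
      = (6*(a*(b*c))) • (X * (Y * Z)) := by
  rw [omega_sq]
  simp only [add_mul, mul_add, smul_mul_assoc, mul_smul_comm, smul_smul,
    hXYX, hXYY, hXZX, hXZZ, hYZY, hYZZ, hXYZ, hXZY, hYZX, smul_zero, add_zero, zero_add]
  module

/-! ### `ιMulti` forms of the basis products -/

lemma hXm : X = ιMulti ℤ 2 ![sb 0, sb 1] := by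
  simp [ιMulti_apply, e, sb, List.ofFn_succ]
lemma hYm : Y = ιMulti ℤ 2 ![sb 2, sb 3] := by
  simp [ιMulti_apply, e, sb, List.ofFn_succ]
lemma hZm : Z = ιMulti ℤ 2 ![sb 4, sb 5] := by
  simp [ιMulti_apply, e, sb, List.ofFn_succ]
lemma hXYm : X * Y = ιMulti ℤ 4 ![sb 0, sb 1, sb 2, sb 3] := by
  simp [ιMulti_apply, e, sb, List.ofFn_succ, mul_assoc]
lemma hXZm : X * Z = ιMulti ℤ 4 ![sb 0, sb 1, sb 4, sb 5] := by
  simp [ιMulti_apply, e, sb, List.ofFn_succ, mul_assoc]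
lemma hYZm : Y * Z = ιMulti ℤ 4 ![sb 2, sb 3, sb 4, sb 5] := by
  simp [ιMulti_apply, e, sb, List.ofFn_succ, mul_assoc]
lemma hXYZm : X * (Y * Z) = ιMulti ℤ 6 ![sb 0, sb 1, sb 2, sb 3, sb 4, sb 5] := by
  simp [ιMulti_apply, e, sb, List.ofFn_succ, mul_assoc]

/-! ### Coefficient-extracting functionals -/

lemma h26 : (2:ℕ) ≤ 6 := by norm_num
lemma h46 : (4:ℕ) ≤ 6 := by norm_num

noncomputable def A2 : V [⋀^Fin 2]→ₗ[ℤ] ℤ :=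
  Matrix.detRowAlternating.compLinearMap (LinearMap.funLeft ℤ ℤ (Fin.castLE h26))
noncomputable def A4 : V [⋀^Fin 4]→ₗ[ℤ] ℤ :=
  Matrix.detRowAlternating.compLinearMap (LinearMap.funLeft ℤ ℤ (Fin.castLE h46))
noncomputable def A6 : V [⋀^Fin 6]→ₗ[ℤ] ℤ := Matrix.detRowAlternating

noncomputable def F2 : ∀ i : ℕ, V [⋀^Fin i]→ₗ[ℤ] ℤ := fun i =>
  match i with
  | 2 => A2
  | _ => 0
noncomputable def F4 : ∀ i : ℕ, V [⋀^Fin i]→ₗ[ℤ] ℤ := fun i =>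
  match i with
  | 4 => A4
  | _ => 0
noncomputable def F6 : ∀ i : ℕ, V [⋀^Fin i]→ₗ[ℤ] ℤ := fun i =>
  match i with
  | 6 => A6
  | _ => 0

noncomputable def φ₂ : ExteriorAlgebra ℤ V →ₗ[ℤ] ℤ := liftAlternating F2
noncomputable def φ₄ : ExteriorAlgebra ℤ V →ₗ[ℤ] ℤ := liftAlternating F4
noncomputable def φ₆ : ExteriorAlgebra ℤ V →ₗ[ℤ] ℤ := liftAlternating F6

lemma phi2_X : φ₂ X = 1 := by
  rw [hXm, φ₂, liftAlternating_apply_ιMulti]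
  show A2 ![sb 0, sb 1] = 1
  have h : (fun i => LinearMap.funLeft ℤ ℤ (Fin.castLE h26) (![sb 0, sb 1] i))
      = (1 : Matrix (Fin 2) (Fin 2) ℤ) := by
    funext i j; fin_cases i <;> fin_cases j <;> rfl
  rw [A2, AlternatingMap.compLinearMap_apply]
  show Matrix.detRowAlternating
    (fun i => LinearMap.funLeft ℤ ℤ (Fin.castLE h26) (![sb 0, sb 1] i)) = 1
  rw [h]
  show Matrix.det (1 : Matrix (Fin 2) (Fin 2) ℤ) = 1
  simp

lemma phi2_Y : φ₂ Y = 0 := by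
  rw [hYm, φ₂, liftAlternating_apply_ιMulti]
  show A2 ![sb 2, sb 3] = 0
  rw [A2, AlternatingMap.compLinearMap_apply]
  exact Matrix.det_eq_zero_of_row_eq_zero 0 (fun j => by fin_cases j <;> rfl)

lemma phi2_Z : φ₂ Z = 0 := by
  rw [hZm, φ₂, liftAlternating_apply_ιMulti]
  show A2 ![sb 4, sb 5] = 0
  rw [A2, AlternatingMap.compLinearMap_apply]
  exact Matrix.det_eq_zero_of_row_eq_zero 0 (fun j => by fin_cases j <;> rfl)

lemma phi4_XY : φ₄ (X * Y) = 1 := by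
  rw [hXYm, φ₄, liftAlternating_apply_ιMulti]
  show A4 ![sb 0, sb 1, sb 2, sb 3] = 1
  have h : (fun i => LinearMap.funLeft ℤ ℤ (Fin.castLE h46) (![sb 0, sb 1, sb 2, sb 3] i))
      = (1 : Matrix (Fin 4) (Fin 4) ℤ) := by
    funext i j; fin_cases i <;> fin_cases j <;> rfl
  rw [A4, AlternatingMap.compLinearMap_apply]
  show Matrix.detRowAlternating
    (fun i => LinearMap.funLeft ℤ ℤ (Fin.castLE h46) (![sb 0, sb 1, sb 2, sb 3] i)) = 1
  rw [h]
  show Matrix.det (1 : Matrix (Fin 4) (Fin 4) ℤ) = 1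
  simp

lemma phi4_XZ : φ₄ (X * Z) = 0 := by
  rw [hXZm, φ₄, liftAlternating_apply_ιMulti]
  show A4 ![sb 0, sb 1, sb 4, sb 5] = 0
  rw [A4, AlternatingMap.compLinearMap_apply]
  exact Matrix.det_eq_zero_of_row_eq_zero 2 (fun j => by fin_cases j <;> rfl)

lemma phi4_YZ : φ₄ (Y * Z) = 0 := by
  rw [hYZm, φ₄, liftAlternating_apply_ιMulti]
  show A4 ![sb 2, sb 3, sb 4, sb 5] = 0
  rw [A4, AlternatingMap.compLinearMap_apply]
  exact Matrix.det_eq_zero_of_row_eq_zero 2 (fun j => by fin_cases j <;> rfl)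

lemma phi6_XYZ : φ₆ (X * (Y * Z)) = 1 := by
  rw [hXYZm, φ₆, liftAlternating_apply_ιMulti]
  show A6 ![sb 0, sb 1, sb 2, sb 3, sb 4, sb 5] = 1
  have h : ![sb 0, sb 1, sb 2, sb 3, sb 4, sb 5] = (1 : Matrix (Fin 6) (Fin 6) ℤ) := by
    funext i j; fin_cases i <;> fin_cases j <;> rfl
  rw [A6, h]
  show Matrix.det (1 : Matrix (Fin 6) (Fin 6) ℤ) = 1
  simp

lemma phi6_map (f : V →ₗ[ℤ] V) :
    φ₆ (ExteriorAlgebra.map f (X * (Y * Z))) = LinearMap.det f := by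
  rw [hXYZm, map_apply_ιMulti, φ₆, liftAlternating_apply_ιMulti,
    show F6 6 = A6 from rfl]
  have h : ⇑f ∘ ![sb 0, sb 1, sb 2, sb 3, sb 4, sb 5] = Matrix.transpose (LinearMap.toMatrix' f) := by
    funext i j
    have hi : (![sb 0, sb 1, sb 2, sb 3, sb 4, sb 5] : Fin 6 → V) i = sb i := by
      fin_cases i <;> rfl
    have harg : sb i = fun j' => if j' = i then (1:ℤ) else 0 := by
      funext j'; simp [sb, Pi.single_apply]
    show f (![sb 0, sb 1, sb 2, sb 3, sb 4, sb 5] i) j = Matrix.transpose (LinearMap.toMatrix' f) i j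
    rw [hi, Matrix.transpose_apply, LinearMap.toMatrix'_apply, harg]
    rw [← harg]; rfl
  rw [A6, h]
  show Matrix.det _ = _
  rw [Matrix.det_transpose, LinearMap.det_toMatrix']

/-! ### Divisibility of values of functionals -/

lemma dvd_phi (φ : ExteriorAlgebra ℤ V →ₗ[ℤ] ℤ) {x y z : ℤ} (hxy : x ∣ y) (hxz : x ∣ z)
    (u v w : ExteriorAlgebra ℤ V) :
    x ∣ φ (x • u + y • v + z • w) := by
  rw [map_add, map_add, map_smul, map_smul, map_smul, smul_eq_mul, smul_eq_mul, smul_eq_mul]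
  exact dvd_add (dvd_add (dvd_mul_right x _) (hxy.mul_right _)) (hxz.mul_right _)

lemma phi2_omega (a b c : ℤ) : φ₂ (a • X + b • Y + c • Z) = a := by
  rw [map_add, map_add, map_smul, map_smul, map_smul, phi2_X, phi2_Y, phi2_Z]
  simp

lemma phi4_omegasq (a b c : ℤ) :
    φ₄ ((2*(a*b)) • (X * Y) + (2*(a*c)) • (X * Z) + (2*(b*c)) • (Y * Z)) = 2*(a*b) := by
  rw [map_add, map_add, map_smul, map_smul, map_smul, phi4_XY, phi4_XZ, phi4_YZ]
  simp

end NFAux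

open NFAux in
/-- Uniqueness half of the normal form theorem for `⋀²(ℤ⁶)`: the integers
`a, b, c` with `0 ≤ a`, `0 ≤ b`, `a ∣ b`, `b ∣ c` in the normal form
`a·(e₁∧e₂) + b·(e₃∧e₄) + c·(e₅∧e₆)` are uniquely determined, i.e. two normal
forms related by a determinant-one automorphism of `ℤ⁶` coincide. -/
theorem normal_form_unique (a b c a' b' c' : ℤ)
    (ha : 0 ≤ a) (hb : 0 ≤ b) (hab : a ∣ b) (hbc : b ∣ c)
    (ha' : 0 ≤ a') (hb' : 0 ≤ b') (hab' : a' ∣ b') (hbc' : b' ∣ c')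
    (f : (Fin 6 → ℤ) ≃ₗ[ℤ] (Fin 6 → ℤ))
    (hdet : LinearMap.det f.toLinearMap = 1)
    (hf : ExteriorAlgebra.map f.toLinearMap
        (a • (e 0 * e 1) + b • (e 2 * e 3) + c • (e 4 * e 5)) =
        a' • (e 0 * e 1) + b' • (e 2 * e 3) + c' • (e 4 * e 5)) :
    a = a' ∧ b = b' ∧ c = c' := by
  set ω : ExteriorAlgebra ℤ (Fin 6 → ℤ) := a • (e 0 * e 1) + b • (e 2 * e 3) + c • (e 4 * e 5) with hω
  set ω' : ExteriorAlgebra ℤ (Fin 6 → ℤ) := a' • (e 0 * e 1) + b' • (e 2 * e 3) + c' • (e 4 * e 5) with hω'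
  have hac : a ∣ c := hab.trans hbc
  have hac' : a' ∣ c' := hab'.trans hbc'
  -- the inverse map
  have hinv : ExteriorAlgebra.map f.symm.toLinearMap ω' = ω := by
    rw [← hf, ← AlgHom.comp_apply, ExteriorAlgebra.map_comp_map]
    have h1 : f.symm.toLinearMap ∘ₗ f.toLinearMap = LinearMap.id := by
      ext v : 1
      simp
    rw [h1, ExteriorAlgebra.map_id]
    rfl
  -- degree 2 invariant : a = a'
  have hA : a = a' := by
    have d1 : a ∣ a' := by
      have : φ₂ (ExteriorAlgebra.map f.toLinearMap ω) = a' := by rw [hf]; exact phi2_omega a' b' c'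
      rw [← this]
      have key := dvd_phi (φ₂.comp (ExteriorAlgebra.map f.toLinearMap).toLinearMap) hab hac
        (e 0 * e 1) (e 2 * e 3) (e 4 * e 5)
      rwa [LinearMap.comp_apply] at key
    have d2 : a' ∣ a := by
      have : φ₂ (ExteriorAlgebra.map f.symm.toLinearMap ω') = a := by
        rw [hinv]; exact phi2_omega a b c
      rw [← this]
      have key := dvd_phi (φ₂.comp (ExteriorAlgebra.map f.symm.toLinearMap).toLinearMap) hab' hac'
        (e 0 * e 1) (e 2 * e 3) (e 4 * e 5)
      rwa [LinearMap.comp_apply] at key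
    exact Int.dvd_antisymm ha ha' d1 d2
  -- degree 4 invariant : a*b = a'*b'
  have hsq : ExteriorAlgebra.map f.toLinearMap (ω * ω) = ω' * ω' := by
    rw [map_mul, hf]
  have hsq' : ExteriorAlgebra.map f.symm.toLinearMap (ω' * ω') = ω * ω := by
    rw [map_mul, hinv]
  have hAB : a * b = a' * b' := by
    have dd : ∀ x y z : ℤ, x ∣ y → y ∣ z → 2*(x*y) ∣ 2*(x*z) ∧ 2*(x*y) ∣ 2*(y*z) := by
      intro x y z hxy hyz
      constructor
      · exact mul_dvd_mul_left 2 (mul_dvd_mul_left x hyz)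
      · refine mul_dvd_mul_left 2 ?_
        rw [mul_comm y z]
        exact mul_dvd_mul (hxy.trans hyz) dvd_rfl
    have d1 : 2*(a*b) ∣ 2*(a'*b') := by
      have h4 : φ₄ (ExteriorAlgebra.map f.toLinearMap (ω * ω)) = 2*(a'*b') := by
        rw [hsq, hω', omega_sq]; exact phi4_omegasq a' b' c'
      rw [← h4, hω, omega_sq]
      have key := dvd_phi (φ₄.comp (ExteriorAlgebra.map f.toLinearMap).toLinearMap)
        (dd a b c hab hbc).1 (dd a b c hab hbc).2 (e 0 * e 1 * (e 2 * e 3))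
        (e 0 * e 1 * (e 4 * e 5)) (e 2 * e 3 * (e 4 * e 5))
      rwa [LinearMap.comp_apply] at key
    have d2 : 2*(a'*b') ∣ 2*(a*b) := by
      have h4 : φ₄ (ExteriorAlgebra.map f.symm.toLinearMap (ω' * ω')) = 2*(a*b) := by
        rw [hsq', hω, omega_sq]; exact phi4_omegasq a b c
      rw [← h4, hω', omega_sq]
      have key := dvd_phi (φ₄.comp (ExteriorAlgebra.map f.symm.toLinearMap).toLinearMap)
        (dd a' b' c' hab' hbc').1 (dd a' b' c' hab' hbc').2 (e 0 * e 1 * (e 2 * e 3))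
        (e 0 * e 1 * (e 4 * e 5)) (e 2 * e 3 * (e 4 * e 5))
      rwa [LinearMap.comp_apply] at key
    have := Int.dvd_antisymm (by positivity) (by positivity)
      ((mul_dvd_mul_iff_left (by norm_num : (2:ℤ) ≠ 0)).mp d1)
      ((mul_dvd_mul_iff_left (by norm_num : (2:ℤ) ≠ 0)).mp d2)
    exact this
  -- degree 6 invariant : a*b*c = a'*b'*c'
  have hABC : a*(b*c) = a'*(b'*c') := by
    have hcube : ExteriorAlgebra.map f.toLinearMap ((ω * ω) * ω) = (ω' * ω') * ω' := by
      rw [map_mul, map_mul, hf]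
    have h6r : φ₆ ((ω' * ω') * ω') = 6*(a'*(b'*c')) := by
      rw [hω', omega_cube, map_smul, phi6_XYZ, smul_eq_mul, mul_one]
    have h6l : φ₆ (ExteriorAlgebra.map f.toLinearMap ((ω * ω) * ω)) = 6*(a*(b*c)) := by
      rw [hω, omega_cube, map_smul, map_smul, smul_eq_mul, phi6_map, hdet, mul_one]
    have : 6*(a*(b*c)) = 6*(a'*(b'*c')) := by rw [← h6l, hcube, h6r]
    exact mul_left_cancel₀ (by norm_num : (6:ℤ) ≠ 0) this
  refine ⟨hA, ?_, ?_⟩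
  · by_cases h0 : a = 0
    · have hb0 : b = 0 := by
        rw [h0] at hab; exact zero_dvd_iff.mp hab
      have hb0' : b' = 0 := by
        rw [← hA, h0] at hab'; exact zero_dvd_iff.mp hab'
      rw [hb0, hb0']
    · exact mul_left_cancel₀ h0 (by rw [hAB, ← hA])
  · by_cases h0 : a = 0
    · have hb0 : b = 0 := by rw [h0] at hab; exact zero_dvd_iff.mp hab
      have hc0 : c = 0 := by rw [hb0] at hbc; exact zero_dvd_iff.mp hbc
      have hb0' : b' = 0 := by rw [← hA, h0] at hab'; exact zero_dvd_iff.mp hab'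
      have hc0' : c' = 0 := by rw [hb0'] at hbc'; exact zero_dvd_iff.mp hbc'
      rw [hc0, hc0']
    · have hbeq : b = b' := mul_left_cancel₀ h0 (by rw [hAB, ← hA])
      by_cases hb0 : b = 0
      · have hc0 : c = 0 := by rw [hb0] at hbc; exact zero_dvd_iff.mp hbc
        have hc0' : c' = 0 := by
          rw [← hbeq, hb0] at hbc'; exact zero_dvd_iff.mp hbc'
        rw [hc0, hc0']
      · have h2 : b * c = b' * c' := mul_left_cancel₀ h0 (by rw [hABC, ← hA])
        rw [← hbeq] at h2
        exact mul_left_cancel₀ hb0 h2
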